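/- Let d > 0 and N ≥ d be integers and let c, m be positive integers. Then ⌊n/d⌋ = ⌊(c·n + c)/m⌋ for all integers n with 0 ≤ n ≤ N if and only if (1 - 1/(N - (N mod d) + 1))·(1/d) ≤ c/m < 1/d. -/

import Mathlib

theorem stmt_6 (d N c m : ℕ) (hd : 0 < d) (hN : d ≤ N) (hc : 0 < c) (hm : 0 < m) :
    (∀ n : ℕ, n ≤ N → n / d = (c * n + c) / m) ↔
      ((1 - 1 / ((N - N % d : ℕ) + 1 : ℚ)) * (1 / d) ≤ (c : ℚ) / m ∧
        (c : ℚ) / m < 1 / d) := by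
  set N' : ℕ := N - N % d with hN'
  have hmod := Nat.div_add_mod N d
  have hmodlt := Nat.mod_lt N hd
  have hN'eq : N' = d * (N / d) := by omega
  have hN'le : N' ≤ N := by omega
  -- translate the rational conditions to natural-number inequalities
  have hdQ : (0:ℚ) < d := by exact_mod_cast hd
  have hmQ : (0:ℚ) < m := by exact_mod_cast hm
  have hAQ : (0:ℚ) < (N':ℚ) + 1 := by positivity
  have hrw : (1 - 1 / ((N':ℚ) + 1)) * (1 / d) = (N' : ℚ) / (d * ((N':ℚ) + 1)) := by
    field_simp
    ring
  have hiff1 : ((1 - 1 / ((N':ℚ) + 1)) * (1 / d) ≤ (c : ℚ) / m) ↔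
      N' * m ≤ c * (d * (N' + 1)) := by
    rw [hrw, div_le_div_iff₀ (by positivity) hmQ]
    exact_mod_cast Iff.rfl
  have hiff2 : ((c : ℚ) / m < 1 / d) ↔ c * d < m := by
    rw [div_lt_div_iff₀ hmQ hdQ, one_mul]
    exact_mod_cast Iff.rfl
  rw [hiff1, hiff2]
  constructor
  · intro h
    constructor
    · -- use n = N'
      have h1 := h N' hN'le
      have hdiv : N' / d = N / d := by rw [hN'eq, Nat.mul_div_cancel_left _ hd]
      have : (N / d) * m ≤ c * N' + c := by
        rw [hdiv] at h1
        calc (N / d) * m = ((c * N' + c) / m) * m := by rw [← h1]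
          _ ≤ c * N' + c := Nat.div_mul_le_self _ _
      calc N' * m = d * (N / d) * m := by rw [hN'eq]
        _ ≤ d * (c * N' + c) := by
            rw [mul_assoc]; exact Nat.mul_le_mul_left d this
        _ = c * (d * (N' + 1)) := by ring
    · -- use n = d - 1
      have h2 := h (d - 1) (by omega)
      have hd1 : (d - 1) / d = 0 := Nat.div_eq_of_lt (by omega)
      have hcd : c * (d - 1) + c = c * d := by
        have : d - 1 + 1 = d := by omega
        calc c * (d - 1) + c = c * ((d - 1) + 1) := by ring
          _ = c * d := by rw [this]
      rw [hd1, hcd] at h2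
      exact (Nat.div_eq_zero_iff.mp h2.symm).resolve_left (by omega)
  · rintro ⟨h1, h2⟩ n hn
    set q := n / d with hq
    have hnmod : d * q + n % d = n := by rw [hq]; exact Nat.div_add_mod n d
    have hnmodlt := Nat.mod_lt n hd
    have hqN : d * q ≤ N' := by
      have hqle : q ≤ N / d := Nat.div_le_div_right hn
      rw [hN'eq]; exact Nat.mul_le_mul_left d hqle
    have hdqn : d * q ≤ n := by omega
    symm
    apply Nat.div_eq_of_lt_le
    · -- q * m ≤ c * n + c
      have key : q * m * d ≤ (c * n + c) * d := by
        have H1 : (N':ℤ) * m ≤ c * (d * (N' + 1)) := by exact_mod_cast h1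
        have H2 : (c:ℤ) * d < m := by exact_mod_cast h2
        have H3 : (d:ℤ) * q ≤ N' := by exact_mod_cast hqN
        have H4 : (d:ℤ) * q ≤ n := by exact_mod_cast hdqn
        have Hp : (0:ℤ) ≤ ((m:ℤ) - c * d) * ((N':ℤ) - d * q) :=
          mul_nonneg (by linarith) (by linarith)
        have hcpos : (0:ℤ) < c := by exact_mod_cast hc
        have : (q:ℤ) * m * d ≤ (c * n + c) * d := by nlinarith [Hp, H1, hcpos, mul_le_mul_of_nonneg_left H4 (by positivity : (0:ℤ) ≤ (c:ℤ) * d)]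
        exact_mod_cast this
      exact Nat.le_of_mul_le_mul_right key hd
    · -- c * n + c < (q + 1) * m
      have hn1 : n + 1 ≤ d * (q + 1) := by
        have he : d * (q + 1) = d * q + d := by ring
        linarith [hnmod, hnmodlt]
      calc c * n + c = c * (n + 1) := by ring
        _ ≤ c * (d * (q + 1)) := Nat.mul_le_mul_left c hn1
        _ = (c * d) * (q + 1) := by ring
        _ < m * (q + 1) := by
            have hq1 : 0 < q + 1 := Nat.succ_pos q
            exact (Nat.mul_lt_mul_right hq1).mpr h2
        _ = (q + 1) * m := by ring
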